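/- Let γ ∈ [0,1), v ∈ [0, r_max/(1−γ)], and suppose v = β + α v where α ∈ (0, γ] and β ≥ 0. If α̂ ∈ (0, γ], β̂ ≥ 0, and v̂ satisfies v̂ = β̂ + α̂ v̂, then |v̂ − v| ≤ (1/(1−γ)) · (|β̂ − β| + |α̂ − α| · v). -/
import Mathlib


/-- Deterministic error-propagation step for the loop estimator:
if `v = β + α v` and `v̂ = β̂ + α̂ v̂` with `α, α̂ ∈ (0, γ]`, `γ < 1`, then
`|v̂ − v| ≤ (1/(1−γ)) (|β̂ − β| + |α̂ − α| v)`. -/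
theorem loop_error_propagation
    (γ rmax v α β vh αh βh : ℝ)
    (hγ : γ ∈ Set.Ico (0:ℝ) 1)
    (hv : v ∈ Set.Icc 0 (rmax / (1 - γ)))
    (hα : α ∈ Set.Ioc 0 γ) (hβ : 0 ≤ β) (heq : v = β + α * v)
    (hαh : αh ∈ Set.Ioc 0 γ) (hβh : 0 ≤ βh) (heqh : vh = βh + αh * vh) :
    |vh - v| ≤ (1 / (1 - γ)) * (|βh - β| + |αh - α| * v) := by
  obtain ⟨hγ0, hγ1⟩ := hγ
  obtain ⟨hα0, hαγ⟩ := hα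
  obtain ⟨hαh0, hαhγ⟩ := hαh
  have hv0 : 0 ≤ v := hv.1
  have h1γ : 0 < 1 - γ := by linarith
  have h1αh : 0 < 1 - αh := by linarith
  have key : (1 - αh) * (vh - v) = (βh - β) + (αh - α) * v := by
    nlinarith [heq, heqh]
  have habs : (1 - αh) * |vh - v| ≤ |βh - β| + |αh - α| * v := by
    calc (1 - αh) * |vh - v| = |(1 - αh) * (vh - v)| := by
          rw [abs_mul, abs_of_pos h1αh]
      _ = |(βh - β) + (αh - α) * v| := by rw [key]
      _ ≤ |βh - β| + |(αh - α) * v| := abs_add_le _ _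
      _ = |βh - β| + |αh - α| * v := by rw [abs_mul, abs_of_nonneg hv0]
  have h1 : (1 - γ) * |vh - v| ≤ (1 - αh) * |vh - v| := by
    apply mul_le_mul_of_nonneg_right (by linarith) (abs_nonneg _)
  rw [div_mul_eq_mul_div, one_mul, le_div_iff₀ h1γ]
  nlinarith [abs_nonneg (vh - v)]
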